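/- For 0 < α ≤ 1 and all r > 0, 0 ≤ ((1+r)^(α+1) - (α+1)r - 1)/r² ≤ (1+r)^(α-1). -/

import Mathlib

/-- For 0 < α ≤ 1 and r > 0: 0 ≤ ((1+r)^(α+1) - (α+1)r - 1)/r² ≤ (1+r)^(α-1). -/
theorem second_difference_quotient_bounds
    (α r : ℝ) (hα : 0 < α) (hα1 : α ≤ 1) (hr : 0 < r) :
    0 ≤ ((1 + r) ^ (α + 1) - (α + 1) * r - 1) / r ^ 2 ∧
    ((1 + r) ^ (α + 1) - (α + 1) * r - 1) / r ^ 2 ≤ (1 + r) ^ (α - 1) := by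
  have h1r : (0:ℝ) < 1 + r := by linarith
  have hrneg : (-1:ℝ) ≤ r := by linarith
  have hr2 : (0:ℝ) < r ^ 2 := by positivity
  constructor
  · apply div_nonneg _ hr2.le
    have := one_add_mul_self_le_rpow_one_add hrneg (p := α + 1) (by linarith)
    nlinarith [this]
  · rw [div_le_iff₀ hr2]
    have hBer : (1 + r) ^ α ≤ 1 + α * r :=
      rpow_one_add_le_one_add_mul_self hrneg hα.le hα1
    have hsplit : (1 + r) ^ (α + 1) = (1 + r) ^ α * (1 + r) := by
      rw [Real.rpow_add h1r, Real.rpow_one]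
    have hsplit2 : (1 + r) ^ (α - 1) * (1 + r) = (1 + r) ^ α := by
      rw [← Real.rpow_add_one h1r.ne' (α - 1)]; ring_nf
    have hpos : 0 ≤ (1 + r) ^ (α - 1) := (Real.rpow_pos_of_pos h1r _).le
    -- Multiply target by (1+r): reduce to a(1+2r) ≤ (1+(α+1)r)(1+r) with a = (1+r)^α
    rw [← mul_le_mul_iff_of_pos_right h1r]
    have key : (1 + r) ^ α * (1 + 2*r) ≤ (1 + (α+1)*r) * (1 + r) := by
      nlinarith [hBer, sq_nonneg r]
    calc ((1 + r) ^ (α + 1) - (α + 1) * r - 1) * (1 + r)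
        = (1 + r) ^ α * (1 + 2*r) - ((1 + (α+1)*r) * (1+r) - (1+r)^α * r^2) := by
          rw [hsplit]; ring
      _ ≤ (1+r)^α * r^2 := by linarith
      _ = (1 + r) ^ (α - 1) * r ^ 2 * (1 + r) := by rw [← hsplit2]; ring
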